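/- Failure of continuity of weakly monotone Sobolev functions for p < 2: the function u : 𝔻 → ℝ on the unit disk defined by u(x) = x₁ + x₁/|x| for x ≠ 0 and u(0) = 0 is weakly monotone, discontinuous at the origin, and its gradient (defined off the origin) is p-integrable on 𝔻 for every 1 ≤ p < 2. -/

import Mathlib

open Set Metric MeasureTheory

local notation "E2" => EuclideanSpace ℝ (Fin 2)

lemma my_norm_eq2 (x : E2) : ‖x‖ = Real.sqrt ((x 0)^2 + (x 1)^2) := by
  rw [EuclideanSpace.norm_eq, Fin.sum_univ_two]
  simp [Real.norm_eq_abs, sq_abs]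

lemma my_abs_coord_le (x : E2) (i : Fin 2) : |x i| ≤ ‖x‖ := by
  rw [my_norm_eq2, ← Real.sqrt_sq_eq_abs]
  apply Real.sqrt_le_sqrt
  have h0 : x 0 ^ 2 ≤ x 0 ^ 2 + x 1 ^ 2 := by nlinarith [sq_nonneg (x 1)]
  have h1 : x 1 ^ 2 ≤ x 0 ^ 2 + x 1 ^ 2 := by nlinarith [sq_nonneg (x 0)]
  fin_cases i
  · exact h0
  · exact h1

lemma my_eq_zero_iff (x : E2) : x = 0 ↔ x 0 = 0 ∧ x 1 = 0 := by
  constructor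
  · rintro rfl; simp
  · rintro ⟨h0, h1⟩
    ext i
    fin_cases i <;> simpa

lemma my_div_mono {a c b : ℝ} (h : a ≤ c) (ha : Real.sqrt (a^2+b^2) ≠ 0)
    (hc : Real.sqrt (c^2+b^2) ≠ 0) :
    a / Real.sqrt (a^2+b^2) ≤ c / Real.sqrt (c^2+b^2) := by
  have hP : 0 < Real.sqrt (a^2+b^2) := lt_of_le_of_ne (Real.sqrt_nonneg _) (Ne.symm ha)
  have hQ : 0 < Real.sqrt (c^2+b^2) := lt_of_le_of_ne (Real.sqrt_nonneg _) (Ne.symm hc)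
  have hP2 : (Real.sqrt (a^2+b^2))^2 = a^2+b^2 := Real.sq_sqrt (by positivity)
  have hQ2 : (Real.sqrt (c^2+b^2))^2 = c^2+b^2 := Real.sq_sqrt (by positivity)
  rw [div_le_div_iff₀ hP hQ]
  rcases le_total 0 a with h0a | h0a
  · have h0c : 0 ≤ c := le_trans h0a h
    have h1 : 0 ≤ a * Real.sqrt (c^2+b^2) := mul_nonneg h0a hQ.le
    have h2 : 0 ≤ c * Real.sqrt (a^2+b^2) := mul_nonneg h0c hP.le
    rw [← Real.sqrt_sq h1, ← Real.sqrt_sq h2]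
    apply Real.sqrt_le_sqrt
    rw [mul_pow, mul_pow, hP2, hQ2]
    have hsq : a^2 ≤ c^2 := by nlinarith
    have hb : a^2 * b^2 ≤ c^2 * b^2 := mul_le_mul_of_nonneg_right hsq (sq_nonneg b)
    nlinarith [hb]
  · rcases le_total 0 c with h0c | h0c
    · calc a * Real.sqrt (c^2+b^2) ≤ 0 := mul_nonpos_of_nonpos_of_nonneg h0a hQ.le
        _ ≤ c * Real.sqrt (a^2+b^2) := mul_nonneg h0c hP.le
    · rw [← neg_le_neg_iff, ← neg_mul, ← neg_mul]
      have h1 : 0 ≤ (-c) * Real.sqrt (a^2+b^2) := mul_nonneg (by linarith) hP.le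
      have h2 : 0 ≤ (-a) * Real.sqrt (c^2+b^2) := mul_nonneg (by linarith) hQ.le
      rw [← Real.sqrt_sq h1, ← Real.sqrt_sq h2]
      apply Real.sqrt_le_sqrt
      rw [mul_pow, mul_pow, hP2, hQ2]
      have hsq : c^2 ≤ a^2 := by nlinarith
      have hb : c^2 * b^2 ≤ a^2 * b^2 := mul_le_mul_of_nonneg_right hsq (sq_nonneg b)
      nlinarith [hb]

lemma my_coord_mono (u : E2 → ℝ)
    (hu : ∀ x : E2, x ≠ 0 → u x = x 0 + x 0 / ‖x‖)
    (hu0 : u 0 = 0) {x y : E2}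
    (h1 : x 1 = y 1) (h0 : x 0 ≤ y 0) : u x ≤ u y := by
  by_cases hx : x = 0
  · by_cases hy : y = 0
    · rw [hx, hy]
    · rw [hx, hu0, hu y hy]
      have hx0 : x 0 = 0 ∧ x 1 = 0 := (my_eq_zero_iff x).1 hx
      have hy1 : y 1 = 0 := h1 ▸ hx0.2
      have hy0 : 0 < y 0 := by
        rcases lt_or_eq_of_le (hx0.1 ▸ h0) with h | h
        · exact h
        · exact absurd ((my_eq_zero_iff y).2 ⟨h.symm, hy1⟩) hy
      have : 0 < ‖y‖ := norm_pos_iff.2 hy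
      positivity
  · by_cases hy : y = 0
    · rw [hy, hu0, hu x hx]
      have hy0 : y 0 = 0 ∧ y 1 = 0 := (my_eq_zero_iff y).1 hy
      have hx1 : x 1 = 0 := h1.trans hy0.2
      have hx0 : x 0 < 0 := by
        rcases lt_or_eq_of_le (hy0.1 ▸ h0) with h | h
        · exact h
        · exact absurd ((my_eq_zero_iff x).2 ⟨h, hx1⟩) hx
      have hnx : 0 < ‖x‖ := norm_pos_iff.2 hx
      have : x 0 / ‖x‖ < 0 := div_neg_of_neg_of_pos hx0 hnx
      linarith
    · rw [hu x hx, hu y hy, my_norm_eq2 x, my_norm_eq2 y, h1]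
      have hax : Real.sqrt ((x 0)^2 + (y 1)^2) ≠ 0 := by
        rw [← h1, ← my_norm_eq2]; exact norm_ne_zero_iff.2 hx
      have hay : Real.sqrt ((y 0)^2 + (y 1)^2) ≠ 0 := by
        rw [← my_norm_eq2]; exact norm_ne_zero_iff.2 hy
      exact add_le_add h0 (my_div_mono h0 hax hay)

lemma my_exists_frontier {V : Set E2} (hV : IsOpen V)
    {γ : ℝ → E2} (hγ : Continuous γ)
    (h0 : γ 0 ∈ V) (h1 : γ 1 ∉ V) :
    ∃ t ∈ Icc (0:ℝ) 1, γ t ∈ frontier V := by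
  set S : Set ℝ := Icc (0:ℝ) 1 ∩ γ ⁻¹' Vᶜ with hS
  have hSne : S.Nonempty := ⟨1, ⟨by norm_num, h1⟩⟩
  have hSbd : BddBelow S := ⟨0, fun t ht => ht.1.1⟩
  have hSclosed : IsClosed S := isClosed_Icc.inter (hV.isClosed_compl.preimage hγ)
  set t₀ := sInf S with ht₀
  have ht₀S : t₀ ∈ S := hSclosed.csInf_mem hSne hSbd
  have ht01 : t₀ ∈ Icc (0:ℝ) 1 := ht₀S.1
  have hne : γ t₀ ∉ V := ht₀S.2
  have ht₀pos : 0 < t₀ := by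
    rcases lt_or_eq_of_le ht01.1 with h | h
    · exact h
    · exact absurd (h ▸ h0) hne
  refine ⟨t₀, ht01, ?_⟩
  rw [hV.frontier_eq]
  refine ⟨?_, hne⟩
  have hVt : ∀ t ∈ Ico (0:ℝ) t₀, γ t ∈ V := by
    intro t ht
    by_contra hc
    exact absurd (csInf_le hSbd ⟨⟨ht.1, le_trans ht.2.le ht01.2⟩, hc⟩) (not_le.2 ht.2)
  have htt : Filter.Tendsto γ (nhdsWithin t₀ (Ico 0 t₀)) (nhds (γ t₀)) :=
    (hγ.tendsto t₀).mono_left nhdsWithin_le_nhds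
  have hNB : (nhdsWithin t₀ (Ico (0:ℝ) t₀)).NeBot := by
    rw [← mem_closure_iff_nhdsWithin_neBot, closure_Ico (ne_of_lt ht₀pos)]
    exact ⟨ht01.1, le_refl _⟩
  exact mem_closure_of_tendsto htt (eventually_nhdsWithin_of_forall hVt)

lemma my_bound (u : E2 → ℝ)
    (hu : ∀ x : E2, x ≠ 0 → u x = x 0 + x 0 / ‖x‖)
    (hu0 : u 0 = 0) {x : E2} (hx : ‖x‖ < 1) : |u x| ≤ 2 := by
  by_cases hx0 : x = 0
  · rw [hx0, hu0]; norm_num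
  · rw [hu x hx0]
    have hnx : 0 < ‖x‖ := norm_pos_iff.2 hx0
    have h1 : |x 0| ≤ ‖x‖ := my_abs_coord_le x 0
    have h2 : |x 0 / ‖x‖| ≤ 1 := by
      rw [abs_div, abs_of_pos hnx]
      exact (div_le_one hnx).2 h1
    calc |x 0 + x 0 / ‖x‖| ≤ |x 0| + |x 0 / ‖x‖| := abs_add_le _ _
      _ ≤ ‖x‖ + 1 := add_le_add h1 h2
      _ ≤ 2 := by linarith





lemma my_fderiv_bound (u : E2 → ℝ)
    (hu : ∀ x : E2, x ≠ 0 → u x = x 0 + x 0 / ‖x‖)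
    {x : E2} (hx : x ≠ 0) (hx1 : ‖x‖ < 1) :
    ‖fderiv ℝ u x‖ ≤ 3 / ‖x‖ := by
  have hnpos : 0 < ‖x‖ := norm_pos_iff.2 hx
  have hn0 : ‖x‖ ≠ 0 := hnpos.ne'
  -- derivative of the norm
  have hdn : DifferentiableAt ℝ (fun y : E2 => ‖y‖) x := by
    simpa using (differentiableAt_id (x := x)).norm ℝ hx
  set N := fderiv ℝ (fun y : E2 => ‖y‖) x with hNdef
  have hN : HasFDerivAt (fun y : E2 => ‖y‖) N x := hdn.hasFDerivAt
  have hNnorm : ‖N‖ ≤ 1 := by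
    have := hN.le_of_lipschitz lipschitzWith_one_norm
    simpa using this
  -- derivative of the inverse of the norm
  have hinv : HasFDerivAt (fun y : E2 => ‖y‖⁻¹) ((-(‖x‖ ^ 2)⁻¹) • N) x := by
    have h1 : HasDerivAt (fun t : ℝ => t⁻¹) (-(‖x‖ ^ 2)⁻¹) ‖x‖ := hasDerivAt_inv hn0
    exact h1.comp_hasFDerivAt x hN
  -- derivative of the first coordinate
  set L : E2 →L[ℝ] ℝ := EuclideanSpace.proj (0 : Fin 2) with hLdef
  have hLnorm : ‖L‖ ≤ 1 := by
    apply ContinuousLinearMap.opNorm_le_bound _ zero_le_one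
    intro y
    rw [one_mul]
    exact (by simpa [Real.norm_eq_abs] using my_abs_coord_le y 0 : ‖y 0‖ ≤ ‖y‖)
  have hL : HasFDerivAt (fun y : E2 => y 0) L x := L.hasFDerivAt
  have hmul : HasFDerivAt (fun y : E2 => y 0 * ‖y‖⁻¹)
      (x 0 • ((-(‖x‖ ^ 2)⁻¹) • N) + ‖x‖⁻¹ • L) x := hL.mul hinv
  have hadd : HasFDerivAt (fun y : E2 => y 0 + y 0 * ‖y‖⁻¹)
      (L + (x 0 • ((-(‖x‖ ^ 2)⁻¹) • N) + ‖x‖⁻¹ • L)) x := hL.add hmul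
  have heq : u =ᶠ[nhds x] fun y : E2 => y 0 + y 0 * ‖y‖⁻¹ := by
    filter_upwards [isOpen_compl_singleton.mem_nhds hx] with y hy
    rw [hu y hy, div_eq_mul_inv]
  have hfd : HasFDerivAt u (L + (x 0 • ((-(‖x‖ ^ 2)⁻¹) • N) + ‖x‖⁻¹ • L)) x :=
    hadd.congr_of_eventuallyEq heq
  rw [hfd.fderiv]
  have h1 : ‖x 0‖ ≤ ‖x‖ := by simpa [Real.norm_eq_abs] using my_abs_coord_le x 0
  have h2 : ‖(-(‖x‖ ^ 2)⁻¹ : ℝ)‖ = (‖x‖ ^ 2)⁻¹ := by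
    rw [Real.norm_eq_abs, abs_neg, abs_of_pos (by positivity)]
  have hterm1 : ‖x 0 • ((-(‖x‖ ^ 2)⁻¹) • N)‖ ≤ ‖x‖⁻¹ := by
    calc ‖x 0 • ((-(‖x‖ ^ 2)⁻¹) • N)‖ ≤ ‖x 0‖ * ‖(-(‖x‖ ^ 2)⁻¹) • N‖ :=
          ContinuousLinearMap.opNorm_smul_le _ _
      _ ≤ ‖x 0‖ * (‖(-(‖x‖ ^ 2)⁻¹ : ℝ)‖ * ‖N‖) := by
          gcongr
          exact ContinuousLinearMap.opNorm_smul_le _ _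
      _ ≤ ‖x‖ * ((‖x‖ ^ 2)⁻¹ * 1) := by
          rw [h2]
          apply mul_le_mul h1 _ (by positivity) hnpos.le
          exact mul_le_mul_of_nonneg_left hNnorm (by positivity)
      _ = ‖x‖⁻¹ := by field_simp
  have hterm2 : ‖(‖x‖⁻¹ : ℝ) • L‖ ≤ ‖x‖⁻¹ := by
    calc ‖(‖x‖⁻¹ : ℝ) • L‖ ≤ ‖(‖x‖⁻¹ : ℝ)‖ * ‖L‖ := ContinuousLinearMap.opNorm_smul_le _ _
      _ ≤ ‖(‖x‖⁻¹ : ℝ)‖ * 1 := mul_le_mul_of_nonneg_left hLnorm (by positivity)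
      _ = ‖x‖⁻¹ := by rw [mul_one, Real.norm_eq_abs, abs_of_pos (by positivity)]
  have hone : (1:ℝ) ≤ ‖x‖⁻¹ := by
    rw [le_inv_comm₀ one_pos hnpos]
    simpa using hx1.le
  calc ‖L + (x 0 • ((-(‖x‖ ^ 2)⁻¹) • N) + ‖x‖⁻¹ • L)‖
      ≤ ‖L‖ + (‖x 0 • ((-(‖x‖ ^ 2)⁻¹) • N)‖ + ‖(‖x‖⁻¹ : ℝ) • L‖) := by
        refine (norm_add_le _ _).trans ?_
        gcongr
        exact norm_add_le _ _
    _ ≤ 1 + (‖x‖⁻¹ + ‖x‖⁻¹) := by gcongr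
    _ ≤ ‖x‖⁻¹ + (‖x‖⁻¹ + ‖x‖⁻¹) := by linarith
    _ = 3 / ‖x‖ := by rw [div_eq_mul_inv]; ring





lemma my_pow_identity (p : ℝ) (n : ℕ) :
    ((3:ℝ) * 2^(n+1))^p * ((2:ℝ)⁻¹^n)^2 = 6^p * ((2:ℝ)^(p-2))^n := by
  have h2 : (0:ℝ) < 2 := two_pos
  have e1 : ((3:ℝ) * 2^(n+1)) = 6 * 2^n := by ring
  rw [e1, Real.mul_rpow (by norm_num) (by positivity)]
  have e2 : (((2:ℝ)^n : ℝ))^p = ((2:ℝ)^p)^n := by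
    rw [← Real.rpow_natCast (2:ℝ) n, ← Real.rpow_mul h2.le, mul_comm,
      Real.rpow_mul h2.le, Real.rpow_natCast]
  have e3 : (((2:ℝ)⁻¹^n)^2) = ((2:ℝ)^(-2 : ℝ))^n := by
    rw [← pow_right_comm]
    congr 1
    rw [Real.rpow_neg h2.le]
    norm_num
  rw [e2, e3, mul_assoc, ← mul_pow, ← Real.rpow_add h2, ← sub_eq_add_neg]

lemma my_lintegral (u : E2 → ℝ)
    (hu : ∀ x : E2, x ≠ 0 → u x = x 0 + x 0 / ‖x‖)
    {p : ℝ} (hp1 : 1 ≤ p) (hp2 : p < 2) :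
    ∫⁻ x in ball (0 : E2) 1, ENNReal.ofReal (‖fderiv ℝ u x‖ ^ p) < ⊤ := by
  have hp0 : (0:ℝ) ≤ p := le_trans zero_le_one hp1
  set A : ℕ → Set E2 := fun n => ball 0 ((2:ℝ)⁻¹^n) \ ball 0 ((2:ℝ)⁻¹^(n+1)) with hA
  set F : E2 → ENNReal := fun x => ENNReal.ofReal (‖fderiv ℝ u x‖ ^ p) with hF
  -- the cover
  have hcover : ball (0:E2) 1 ⊆ {0} ∪ ⋃ n, A n := by
    intro x hx
    by_cases hx0 : x = 0
    · exact Or.inl hx0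
    right
    have hxpos : 0 < ‖x‖ := norm_pos_iff.2 hx0
    have hxlt : ‖x‖ < 1 := by simpa using mem_ball_zero_iff.1 hx
    have hex : ∃ n : ℕ, (2:ℝ)⁻¹^(n+1) ≤ ‖x‖ := by
      obtain ⟨k, hk⟩ := exists_pow_lt_of_lt_one hxpos (by norm_num : (2:ℝ)⁻¹ < 1)
      refine ⟨k, le_trans ?_ hk.le⟩
      exact pow_le_pow_of_le_one (by norm_num) (by norm_num) (Nat.le_succ k)
    set n := Nat.find hex with hn
    have hlow : (2:ℝ)⁻¹^(n+1) ≤ ‖x‖ := Nat.find_spec hex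
    have hup : ‖x‖ < (2:ℝ)⁻¹^n := by
      rcases Nat.eq_zero_or_pos n with h | h
      · rw [h, pow_zero]; exact hxlt
      · obtain ⟨m, hm⟩ := Nat.exists_eq_succ_of_ne_zero h.ne'
        have := Nat.find_min hex (m := m) (by omega)
        rw [hm]
        exact not_le.1 this
    refine mem_iUnion.2 ⟨n, ?_, ?_⟩
    · exact mem_ball_zero_iff.2 hup
    · intro hmem
      exact absurd (mem_ball_zero_iff.1 hmem) (not_lt.2 hlow)
  -- per-annulus bound
  have key : ∀ n : ℕ, ∫⁻ x in A n, F x ≤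
      (ENNReal.ofReal ((6:ℝ)^p) * volume (ball (0:E2) 1)) * (ENNReal.ofReal ((2:ℝ)^(p-2)))^n := by
    intro n
    have hAn : MeasurableSet (A n) := measurableSet_ball.diff measurableSet_ball
    have hbnd : ∀ x ∈ A n, F x ≤ ENNReal.ofReal (((3:ℝ) * 2^(n+1))^p) := by
      intro x hxA
      have hlow : (2:ℝ)⁻¹^(n+1) ≤ ‖x‖ := by
        by_contra hcon
        exact hxA.2 (mem_ball_zero_iff.2 (not_le.1 hcon))
      have hup : ‖x‖ < (2:ℝ)⁻¹^n := mem_ball_zero_iff.1 hxA.1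
      have hpow1 : ((2:ℝ)⁻¹^n) ≤ 1 := pow_le_one₀ (by norm_num) (by norm_num)
      have hx1 : ‖x‖ < 1 := lt_of_lt_of_le hup hpow1
      have hxpos : 0 < ‖x‖ := lt_of_lt_of_le (by positivity) hlow
      have hx0 : x ≠ 0 := norm_pos_iff.1 hxpos
      have hb : ‖fderiv ℝ u x‖ ≤ (3:ℝ) * 2^(n+1) := by
        refine le_trans (my_fderiv_bound u hu hx0 hx1) ?_
        rw [show ((3:ℝ) * 2^(n+1)) = 3 / (2:ℝ)⁻¹^(n+1) by
          rw [inv_pow]; field_simp]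
        exact div_le_div_of_nonneg_left (by norm_num) (by positivity) hlow
      apply ENNReal.ofReal_le_ofReal
      exact Real.rpow_le_rpow (norm_nonneg _) hb hp0
    calc ∫⁻ x in A n, F x ≤ ∫⁻ _ in A n, ENNReal.ofReal (((3:ℝ) * 2^(n+1))^p) :=
          setLIntegral_mono measurable_const hbnd
      _ = ENNReal.ofReal (((3:ℝ) * 2^(n+1))^p) * volume (A n) := setLIntegral_const _ _
      _ ≤ ENNReal.ofReal (((3:ℝ) * 2^(n+1))^p) * volume (ball (0:E2) ((2:ℝ)⁻¹^n)) :=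
          mul_le_mul_right (measure_mono diff_subset) _
      _ = ENNReal.ofReal (((3:ℝ) * 2^(n+1))^p) *
            (ENNReal.ofReal (((2:ℝ)⁻¹^n)^2) * volume (ball (0:E2) 1)) := by
          rw [Measure.addHaar_ball _ _ (by positivity : (0:ℝ) ≤ (2:ℝ)⁻¹^n)]
          congr 2
          rw [finrank_euclideanSpace_fin]
      _ = (ENNReal.ofReal ((6:ℝ)^p) * volume (ball (0:E2) 1)) *
            (ENNReal.ofReal ((2:ℝ)^(p-2)))^n := by
          rw [← mul_assoc, ← ENNReal.ofReal_mul (by positivity), my_pow_identity,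
            ← ENNReal.ofReal_pow (by positivity), ENNReal.ofReal_mul (by positivity)]
          ring
  -- sum up
  have hq1 : ENNReal.ofReal ((2:ℝ)^(p-2)) < 1 := by
    rw [show (1 : ENNReal) = ENNReal.ofReal 1 by simp]
    apply (ENNReal.ofReal_lt_ofReal_iff one_pos).2
    exact Real.rpow_lt_one_of_one_lt_of_neg one_lt_two (by linarith)
  calc ∫⁻ x in ball (0:E2) 1, F x ≤ ∫⁻ x in {0} ∪ ⋃ n, A n, F x := lintegral_mono_set hcover
    _ ≤ (∫⁻ x in ({0} : Set E2), F x) + ∫⁻ x in ⋃ n, A n, F x := lintegral_union_le _ _ _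
    _ ≤ 0 + ∑' n, ∫⁻ x in A n, F x := by
        gcongr
        · exact le_of_eq (setLIntegral_measure_zero _ _ (measure_singleton 0))
        · exact lintegral_iUnion_le _ _
    _ ≤ 0 + ∑' n, (ENNReal.ofReal ((6:ℝ)^p) * volume (ball (0:E2) 1)) *
          (ENNReal.ofReal ((2:ℝ)^(p-2)))^n := by
        gcongr
        exact key _
    _ = (ENNReal.ofReal ((6:ℝ)^p) * volume (ball (0:E2) 1)) *
          (1 - ENNReal.ofReal ((2:ℝ)^(p-2)))⁻¹ := by
        rw [zero_add, ENNReal.tsum_mul_left, ENNReal.tsum_geometric]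
    _ < ⊤ := by
        apply ENNReal.mul_lt_top
        · exact ENNReal.mul_lt_top ENNReal.ofReal_lt_top measure_ball_lt_top
        · rw [ENNReal.inv_lt_top]
          exact tsub_pos_of_lt hq1




lemma my_path_coord (x : E2) (c t : ℝ) :
    (x + (t * c) • EuclideanSpace.single (0 : Fin 2) (1:ℝ)) 0 = x 0 + t * c ∧
    (x + (t * c) • EuclideanSpace.single (0 : Fin 2) (1:ℝ)) 1 = x 1 := by
  constructor <;>
    simp [PiLp.add_apply, PiLp.smul_apply, EuclideanSpace.single_apply, smul_eq_mul]

theorem weakly_monotone_discontinuous_example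
    (u : EuclideanSpace ℝ (Fin 2) → ℝ)
    (hu : ∀ x : EuclideanSpace ℝ (Fin 2), x ≠ 0 → u x = x 0 + x 0 / ‖x‖)
    (hu0 : u 0 = 0) :
    (∀ V : Set (EuclideanSpace ℝ (Fin 2)), IsOpen V → closure V ⊆ ball 0 1 →
      IsCompact (closure V) →
      BddAbove (u '' frontier V) ∧ BddBelow (u '' frontier V) ∧
      ∀ x ∈ V, u x ≤ sSup (u '' frontier V) ∧ sInf (u '' frontier V) ≤ u x) ∧
    (¬ ContinuousWithinAt u (ball 0 1) 0) ∧
    (∀ p : ℝ, 1 ≤ p → p < 2 →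
      ∫⁻ x in ball (0 : EuclideanSpace ℝ (Fin 2)) 1,
        ENNReal.ofReal (‖fderiv ℝ u x‖ ^ p) < ⊤) := by
  refine ⟨?_, ?_, fun p hp1 hp2 => my_lintegral u hu hp1 hp2⟩
  · -- weak monotonicity
    intro V hVo hVb _hVc
    have hfr : frontier V ⊆ ball (0:E2) 1 := fun z hz => hVb (frontier_subset_closure hz)
    have hbdd : BddAbove (u '' frontier V) := by
      refine ⟨2, ?_⟩
      rintro _ ⟨z, hz, rfl⟩
      have := my_bound u hu hu0 (mem_ball_zero_iff.1 (hfr hz))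
      exact (abs_le.1 this).2
    have hbddb : BddBelow (u '' frontier V) := by
      refine ⟨-2, ?_⟩
      rintro _ ⟨z, hz, rfl⟩
      have := my_bound u hu hu0 (mem_ball_zero_iff.1 (hfr hz))
      exact (abs_le.1 this).1
    refine ⟨hbdd, hbddb, fun x hx => ?_⟩
    have hxball : x ∈ ball (0:E2) 1 := hVb (subset_closure hx)
    have hxn : ‖x‖ < 1 := mem_ball_zero_iff.1 hxball
    have hx0le : x 0 ≤ ‖x‖ := le_trans (le_abs_self _) (my_abs_coord_le x 0)
    have hx0ge : -‖x‖ ≤ x 0 := neg_le_of_abs_le (my_abs_coord_le x 0)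
    set e₀ : E2 := EuclideanSpace.single (0 : Fin 2) (1:ℝ) with he₀
    constructor
    · -- maximum side
      set c : ℝ := 2 - x 0 with hc
      set γ : ℝ → E2 := fun t => x + (t * c) • e₀ with hγdef
      have hγcont : Continuous γ := by
        apply continuous_const.add
        exact (continuous_id.mul continuous_const).smul continuous_const
      have hγ0 : γ 0 ∈ V := by
        have : γ 0 = x := by simp [hγdef]
        rw [this]; exact hx
      have hγ1 : γ 1 ∉ V := by
        intro hmem
        have h1 : (γ 1) 0 = 2 := by
          simp only [hγdef, he₀]
          rw [(my_path_coord x c 1).1, hc]; ring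
        have h2 : ‖γ 1‖ < 1 := mem_ball_zero_iff.1 (hVb (subset_closure hmem))
        have := my_abs_coord_le (γ 1) 0
        rw [h1] at this
        norm_num at this
        linarith
      obtain ⟨t, ht, htfr⟩ := my_exists_frontier hVo hγcont hγ0 hγ1
      have hmono : u x ≤ u (γ t) := by
        apply my_coord_mono u hu hu0
        · simp only [hγdef, he₀]
          exact ((my_path_coord x c t).2).symm
        · simp only [hγdef, he₀]
          rw [(my_path_coord x c t).1]
          have : 0 ≤ t * c := mul_nonneg ht.1 (by rw [hc]; linarith)
          linarith
      exact hmono.trans (le_csSup hbdd ⟨γ t, htfr, rfl⟩)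
    · -- minimum side
      set c : ℝ := -2 - x 0 with hc
      set γ : ℝ → E2 := fun t => x + (t * c) • e₀ with hγdef
      have hγcont : Continuous γ := by
        apply continuous_const.add
        exact (continuous_id.mul continuous_const).smul continuous_const
      have hγ0 : γ 0 ∈ V := by
        have : γ 0 = x := by simp [hγdef]
        rw [this]; exact hx
      have hγ1 : γ 1 ∉ V := by
        intro hmem
        have h1 : (γ 1) 0 = -2 := by
          simp only [hγdef, he₀]
          rw [(my_path_coord x c 1).1, hc]; ring
        have h2 : ‖γ 1‖ < 1 := mem_ball_zero_iff.1 (hVb (subset_closure hmem))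
        have := my_abs_coord_le (γ 1) 0
        rw [h1] at this
        norm_num at this
        linarith
      obtain ⟨t, ht, htfr⟩ := my_exists_frontier hVo hγcont hγ0 hγ1
      have hmono : u (γ t) ≤ u x := by
        apply my_coord_mono u hu hu0
        · simp only [hγdef, he₀]
          exact (my_path_coord x c t).2
        · simp only [hγdef, he₀]
          rw [(my_path_coord x c t).1]
          have : t * c ≤ 0 := mul_nonpos_of_nonneg_of_nonpos ht.1 (by rw [hc]; linarith)
          linarith
      exact (csInf_le hbddb ⟨γ t, htfr, rfl⟩).trans hmono
  · -- discontinuity at 0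
    intro h
    set e₀ : E2 := EuclideanSpace.single (0 : Fin 2) (1:ℝ) with he₀
    set f : ℕ → E2 := fun n => ((n:ℝ) + 2)⁻¹ • e₀ with hf
    have hpos : ∀ n : ℕ, (0:ℝ) < ((n:ℝ) + 2)⁻¹ := by
      intro n; positivity
    have hnorm : ∀ n : ℕ, ‖f n‖ = ((n:ℝ) + 2)⁻¹ := by
      intro n
      rw [hf]
      rw [norm_smul, EuclideanSpace.norm_single, Real.norm_eq_abs, abs_of_pos (hpos n)]
      norm_num
    have hmem : ∀ n : ℕ, f n ∈ ball (0:E2) 1 := by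
      intro n
      rw [mem_ball_zero_iff, hnorm n]
      rw [inv_lt_one_iff₀]
      right; push_cast; linarith [Nat.cast_nonneg (α := ℝ) n]
    have htend0 : Filter.Tendsto f Filter.atTop (nhds 0) := by
      have h1 : Filter.Tendsto (fun n : ℕ => ((n:ℝ) + 2)) Filter.atTop Filter.atTop :=
        Filter.tendsto_atTop_add_const_right _ 2 tendsto_natCast_atTop_atTop
      have h2 : Filter.Tendsto (fun n : ℕ => ((n:ℝ) + 2)⁻¹) Filter.atTop (nhds 0) :=
        h1.inv_tendsto_atTop
      have := h2.smul_const e₀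
      rwa [zero_smul] at this
    have htend : Filter.Tendsto f Filter.atTop (nhdsWithin 0 (ball (0:E2) 1)) := by
      rw [tendsto_nhdsWithin_iff]
      exact ⟨htend0, Filter.Eventually.of_forall hmem⟩
    have hcomp : Filter.Tendsto (u ∘ f) Filter.atTop (nhds 0) := by
      have := h.tendsto.comp htend
      rwa [hu0] at this
    have hval : ∀ n : ℕ, (1:ℝ) ≤ (u ∘ f) n := by
      intro n
      have hfne : f n ≠ 0 := by
        intro hzero
        have := hnorm n
        rw [hzero, norm_zero] at this
        exact absurd this.symm (ne_of_gt (hpos n))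
      have hcoord : (f n) 0 = ((n:ℝ) + 2)⁻¹ := by
        simp [hf, he₀, PiLp.smul_apply, EuclideanSpace.single_apply, smul_eq_mul]
      have : (u ∘ f) n = ((n:ℝ) + 2)⁻¹ + 1 := by
        show u (f n) = _
        rw [hu (f n) hfne, hcoord, hnorm n, div_self (ne_of_gt (hpos n))]
      rw [this]
      linarith [(hpos n).le]
    have : (1:ℝ) ≤ 0 := ge_of_tendsto' hcomp hval
    linarith
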